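/- For any integer m ≥ 3, ∫_{−π/m}^{π/m} |sin((m/2)(θ−ω))| · sin(mω) dω = −(4/(3m)) · sin(mθ) for all θ ∈ ℝ. -/

import Mathlib

open Real Set intervalIntegral

-- antiderivative lemma
lemma anti (a b : ℝ) : (∫ v in a..b, Real.sin (v/2) * Real.cos v)
    = (-(1/3)*Real.cos (3/2*b) + Real.cos (b/2)) - (-(1/3)*Real.cos (3/2*a) + Real.cos (a/2)) := by
  have : ∀ x ∈ Set.uIcc a b, HasDerivAt (fun v => -(1/3)*Real.cos (3/2*v) + Real.cos (v/2))
      (Real.sin (x/2) * Real.cos x) x := by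
    intro x _
    have h1 : HasDerivAt (fun v : ℝ => (3/2)*v) (3/2) x := by
      simpa using (hasDerivAt_id x).const_mul (3/2 : ℝ)
    have h2 : HasDerivAt (fun v : ℝ => v/2) (1/2) x := by
      simpa using (hasDerivAt_id x).div_const 2
    have h3 := (h1.cos.const_mul (-(1/3))).add h2.cos
    refine h3.congr_deriv (Eq.symm ?_)
    have hs : Real.sin (3/2*x) = Real.sin (x/2 + (x/2 + x/2)) := by ring_nf
    have hc : Real.cos x = Real.cos (x/2 + x/2) := by ring_nf
    rw [hs, hc, Real.sin_add, Real.sin_add, Real.cos_add]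
    linear_combination (-(Real.sin (x/2))/2) * Real.sin_sq_add_cos_sq (x/2)
  have hint : IntervalIntegrable (fun v => Real.sin (v/2) * Real.cos v) MeasureTheory.volume a b :=
    ((Real.continuous_sin.comp (continuous_id.div_const 2)).mul Real.continuous_cos).intervalIntegrable _ _
  rw [intervalIntegral.integral_eq_sub_of_hasDerivAt this hint]

lemma key : (∫ v in (-π)..π, |Real.sin (v/2)| * Real.cos v) = -(4/3) := by
  have hsplit : (∫ v in (-π)..0, |Real.sin (v/2)| * Real.cos v)
      + (∫ v in (0:ℝ)..π, |Real.sin (v/2)| * Real.cos v)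
      = ∫ v in (-π)..π, |Real.sin (v/2)| * Real.cos v := by
    apply intervalIntegral.integral_add_adjacent_intervals <;>
      exact ((Real.continuous_sin.comp (continuous_id.div_const 2)).abs.mul
        Real.continuous_cos).intervalIntegrable _ _
  have h1 : (∫ v in (-π)..0, |Real.sin (v/2)| * Real.cos v)
      = ∫ v in (-π)..0, -(Real.sin (v/2) * Real.cos v) := by
    apply intervalIntegral.integral_congr
    intro v hv
    dsimp only
    rw [Set.uIcc_of_le (by linarith [Real.pi_pos] : -π ≤ (0:ℝ))] at hv
    have h : Real.sin (v/2) ≤ 0 := by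
      apply Real.sin_nonpos_of_nonpos_of_neg_pi_le
      · linarith [hv.2]
      · have := Real.pi_pos; linarith [hv.1]
    simp [abs_of_nonpos h]
  have h2 : (∫ v in (0:ℝ)..π, |Real.sin (v/2)| * Real.cos v)
      = ∫ v in (0:ℝ)..π, Real.sin (v/2) * Real.cos v := by
    apply intervalIntegral.integral_congr
    intro v hv
    dsimp only
    rw [Set.uIcc_of_le Real.pi_pos.le] at hv
    have h : 0 ≤ Real.sin (v/2) := by
      apply Real.sin_nonneg_of_nonneg_of_le_pi
      · linarith [hv.1]
      · linarith [hv.2, Real.pi_pos]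
    rw [abs_of_nonneg h]
  rw [← hsplit, h1, h2, intervalIntegral.integral_neg, anti, anti]
  have c1 : Real.cos (3/2*π) = 0 := by
    have : (3/2)*π = π/2 + π := by ring
    rw [this, Real.cos_add_pi, Real.cos_pi_div_two, neg_zero]
  have c2 : Real.cos (π/2) = 0 := Real.cos_pi_div_two
  have c3 : Real.cos (3/2*(-π)) = 0 := by
    have : (3/2)*(-π) = -(3/2*π) := by ring
    rw [this, Real.cos_neg, c1]
  have c4 : Real.cos ((-π)/2) = 0 := by
    have : (-π)/2 = -(π/2) := by ring
    rw [this, Real.cos_neg, c2]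
  simp [c1, c2, c3, c4]
  norm_num

lemma odd0 : (∫ v in (-π)..π, |Real.sin (v/2)| * Real.sin v) = 0 := by
  have h := intervalIntegral.integral_comp_neg (fun v => |Real.sin (v/2)| * Real.sin v) (a := -π) (b := π)
  simp only [neg_neg] at h
  have h2 : (∫ v in (-π)..π, |Real.sin (-v/2)| * Real.sin (-v))
      = ∫ v in (-π)..π, -(|Real.sin (v/2)| * Real.sin v) := by
    apply intervalIntegral.integral_congr
    intro v _
    dsimp only
    have hv : -v/2 = -(v/2) := by ring
    rw [hv, Real.sin_neg, Real.sin_neg, abs_neg]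
    ring
  rw [h2, intervalIntegral.integral_neg] at h
  linarith

theorem stmt5 (m : ℕ) (hm : 3 ≤ m) (θ : ℝ) :
    (∫ ω in (-(π / m))..(π / m),
        |Real.sin (((m : ℝ) / 2) * (θ - ω))| * Real.sin ((m : ℝ) * ω))
      = -(4 / (3 * (m : ℝ))) * Real.sin ((m : ℝ) * θ) := by
  set M : ℝ := (m : ℝ) with hMdef
  have hM : (0:ℝ) < M := by
    have : (3:ℝ) ≤ M := by rw [hMdef]; exact_mod_cast hm
    linarith
  have hMne : M ≠ 0 := ne_of_gt hM
  -- Step A: rewrite integrand as g (M * ω)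
  have stepA : (∫ ω in (-(π / M))..(π / M),
      |Real.sin ((M / 2) * (θ - ω))| * Real.sin (M * ω))
      = ∫ ω in (-(π / M))..(π / M),
        (fun u => |Real.sin ((M * θ - u)/2)| * Real.sin u) (M * ω) := by
    apply intervalIntegral.integral_congr
    intro ω _
    dsimp only
    congr 2
    ring
  have stepA2 := intervalIntegral.integral_comp_mul_left (a := -(π/M)) (b := π/M)
    (fun u => |Real.sin ((M * θ - u)/2)| * Real.sin u) hMne
  rw [stepA, stepA2]
  have e1 : M * -(π / M) = -π := by field_simp
  have e2 : M * (π / M) = π := by field_simp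
  rw [e1, e2]
  -- Step B: rewrite integrand as h (M*θ - u)
  have stepB : (∫ u in (-π)..π, |Real.sin ((M * θ - u)/2)| * Real.sin u)
      = ∫ u in (-π)..π,
        (fun v => |Real.sin (v/2)| * Real.sin (M * θ - v)) (M * θ - u) := by
    apply intervalIntegral.integral_congr
    intro u _
    dsimp only
    congr 2
    ring
  have stepB2 := intervalIntegral.integral_comp_sub_left (a := -π) (b := π)
    (fun v => |Real.sin (v/2)| * Real.sin (M * θ - v)) (M * θ)
  rw [stepB, stepB2]
  -- Step C: periodicity
  have hper : Function.Periodic (fun v => |Real.sin (v/2)| * Real.sin (M * θ - v)) (2*π) := by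
    intro v
    dsimp only
    have e3 : (v + 2*π)/2 = v/2 + π := by ring
    have e4 : M * θ - (v + 2*π) = (M * θ - v) - 2*π := by ring
    rw [e3, e4, Real.sin_add_pi, abs_neg, Real.sin_sub_two_pi]
  have hC := hper.intervalIntegral_add_eq (M * θ - π) (-π)
  have e5 : M * θ - π + 2*π = M * θ - -π := by ring
  have e6 : -π + 2*π = π := by ring
  rw [e5, e6] at hC
  rw [hC]
  -- Step D
  have stepD : (∫ v in (-π)..π, |Real.sin (v/2)| * Real.sin (M * θ - v))
      = ∫ v in (-π)..π, (Real.sin (M*θ) * (|Real.sin (v/2)| * Real.cos v)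
          - Real.cos (M*θ) * (|Real.sin (v/2)| * Real.sin v)) := by
    apply intervalIntegral.integral_congr
    intro v _
    dsimp only
    rw [Real.sin_sub]
    ring
  have i1 : IntervalIntegrable (fun v => Real.sin (M*θ) * (|Real.sin (v/2)| * Real.cos v))
      MeasureTheory.volume (-π) π :=
    (continuous_const.mul ((Real.continuous_sin.comp (continuous_id.div_const 2)).abs.mul
      Real.continuous_cos)).intervalIntegrable _ _
  have i2 : IntervalIntegrable (fun v => Real.cos (M*θ) * (|Real.sin (v/2)| * Real.sin v))
      MeasureTheory.volume (-π) π :=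
    (continuous_const.mul ((Real.continuous_sin.comp (continuous_id.div_const 2)).abs.mul
      Real.continuous_sin)).intervalIntegrable _ _
  rw [stepD, intervalIntegral.integral_sub i1 i2,
    intervalIntegral.integral_const_mul, intervalIntegral.integral_const_mul, key, odd0]
  rw [smul_eq_mul]
  field_simp
  ring
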